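/- arXiv:2603.13184 — 3 statements merged into one kernel-verified Lean document; each statement's English description precedes it below -/
import Mathlib

section
/- Let (X,d) be a metric space, let P ⊆ X be a nonempty finite set, and let k ≥ 1 be an integer with k ≤ |P|. Then for every valid farthest-first output C on P with k centers, cost(C,P) ≤ 2·OPT(P,k). -/
/-- `setDist s C` is the distance from the point `s` to the set `C`,
i.e. the infimum (for nonempty finite `C`, the minimum) of `dist s c` over `c ∈ C`. -/
noncomputable def setDist {X : Type*} [MetricSpace X] (s : X) (C : Set X) : ℝ :=
  sInf ((fun c => dist s c) '' C)

/-- `cost C S` is the supremum (for nonempty finite `S`, the maximum) over `s ∈ S`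
of the distance from `s` to the center set `C`. -/
noncomputable def cost {X : Type*} [MetricSpace X] (C S : Set X) : ℝ :=
  sSup ((fun s => setDist s C) '' S)

/-- `kOPT P k` is the optimal `k`-center cost on the finite set `P`:
the minimum of `cost C P` over subsets `C ⊆ P` with `|C| = k`. -/
noncomputable def kOPT {X : Type*} [MetricSpace X] (P : Finset X) (k : ℕ) : ℝ :=
  sInf { r : ℝ | ∃ C : Finset X, C ⊆ P ∧ C.card = k ∧ cost (C : Set X) (P : Set X) = r }

/-- `IsFF S k C` : `C` is a valid farthest-first output on `S` with `k` centers,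
i.e. there is an enumeration `c 0, …, c (k-1)` of the `k` distinct points of `C`,
all in `S`, such that each `c i` (for `i ≥ 1`) maximizes the distance to the
previously chosen centers over all points of `S`. -/
def IsFF {X : Type*} [MetricSpace X] (S : Finset X) (k : ℕ) (C : Finset X) : Prop :=
  ∃ c : Fin k → X, Function.Injective c ∧ (∀ i, c i ∈ S) ∧
    (↑C : Set X) = Set.range c ∧
    ∀ i : Fin k, 0 < (i : ℕ) → ∀ s ∈ S,
      setDist s (c '' {j | j < i}) ≤ setDist (c i) (c '' {j | j < i})

section Helpers
variable {X : Type*} [MetricSpace X]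

lemma setDist_le {s : X} {C : Set X} {c : X} (hc : c ∈ C) : setDist s C ≤ dist s c :=
  csInf_le ⟨0, by rintro x ⟨c', _, rfl⟩; exact dist_nonneg⟩ ⟨c, hc, rfl⟩

lemma setDist_nonneg {s : X} {C : Set X} (h : C.Nonempty) : 0 ≤ setDist s C :=
  le_csInf (h.image _) (by rintro x ⟨c, _, rfl⟩; exact dist_nonneg)

lemma setDist_anti {s : X} {C D : Set X} (h : C ⊆ D) (hC : C.Nonempty) :
    setDist s D ≤ setDist s C :=
  csInf_le_csInf ⟨0, by rintro x ⟨c', _, rfl⟩; exact dist_nonneg⟩ (hC.image _)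
    (Set.image_mono h)

lemma le_cost {C S : Set X} (hS : S.Finite) {s : X} (hs : s ∈ S) :
    setDist s C ≤ cost C S :=
  le_csSup (hS.image _).bddAbove ⟨s, hs, rfl⟩

lemma exists_cost_eq {C S : Set X} (hS : S.Finite) (hne : S.Nonempty) :
    ∃ s ∈ S, setDist s C = cost C S := by
  have := (hne.image (fun s => setDist s C)).csSup_mem (hS.image _)
  obtain ⟨s, hs, h⟩ := this
  exact ⟨s, hs, h⟩

lemma exists_setDist_eq {s : X} {C : Set X} (hfin : C.Finite) (hne : C.Nonempty) :
    ∃ o ∈ C, dist s o = setDist s C := by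
  have := (hne.image (fun c => dist s c)).csInf_mem (hfin.image _)
  obtain ⟨o, ho, h⟩ := this
  exact ⟨o, ho, h⟩

lemma cost_nonneg {C S : Set X} (hS : S.Finite) (hSne : S.Nonempty) (hCne : C.Nonempty) :
    0 ≤ cost C S := by
  obtain ⟨p, hp⟩ := hSne
  exact le_trans (setDist_nonneg hCne) (le_cost hS hp)

lemma kOPT_attained (P : Finset X) (k : ℕ) (hk : k ≤ P.card) :
    ∃ C : Finset X, C ⊆ P ∧ C.card = k ∧ cost (C : Set X) (P : Set X) = kOPT P k := by
  set T := { r : ℝ | ∃ C : Finset X, C ⊆ P ∧ C.card = k ∧ cost (C : Set X) (P : Set X) = r }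
    with hTdef
  have hT : T = ↑(((P.powerset.filter (fun C => C.card = k))).image
      (fun C : Finset X => cost (C : Set X) (P : Set X))) := by
    ext r
    simp only [hTdef, Set.mem_setOf_eq, Finset.coe_image, Set.mem_image, Finset.mem_coe,
      Finset.mem_filter, Finset.mem_powerset]
    tauto
  have hfin : T.Finite := by rw [hT]; exact Finset.finite_toSet _
  have hne : T.Nonempty := by
    obtain ⟨Q, hQ, hcard⟩ := P.exists_subset_card_eq hk
    exact ⟨_, Q, hQ, hcard, rfl⟩
  exact hne.csInf_mem hfin

end Helpers

/-- Gonzalez' theorem: every valid farthest-first output `C` on `P` with `k` centers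
satisfies `cost(C, P) ≤ 2 · OPT(P, k)`. -/
theorem stmt_0 {X : Type*} [MetricSpace X] (P : Finset X) (hP : P.Nonempty)
    (k : ℕ) (hk : 1 ≤ k) (hkP : k ≤ P.card)
    (C : Finset X) (hC : IsFF P k C) :
    cost (C : Set X) (P : Set X) ≤ 2 * kOPT P k := by
  obtain ⟨c, hcinj, hcP, hCr, hmax⟩ := hC
  obtain ⟨C', hC'P, hC'card, hC'cost⟩ := kOPT_attained P k hkP
  have hC'ne : (↑C' : Set X).Nonempty := by
    rw [Finset.coe_nonempty, ← Finset.card_pos, hC'card]; omega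
  have hOPTnn : 0 ≤ kOPT P k := by
    rw [← hC'cost]
    exact cost_nonneg P.finite_toSet (by exact_mod_cast hP) hC'ne
  obtain ⟨s, hsP, hs⟩ := exists_cost_eq (C := (↑C : Set X)) P.finite_toSet
    (by exact_mod_cast hP)
  set r := cost (↑C : Set X) (↑P : Set X) with hrdef
  by_cases hr : r ≤ 0
  · linarith
  push_neg at hr
  -- the k+1 points
  set pts : Fin (k + 1) → X := fun i =>
    if h : (i : ℕ) < k then c ⟨i, h⟩ else s with hpts
  have hptsP : ∀ i, pts i ∈ P := by
    intro i
    simp only [hpts]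
    split
    · exact hcP _
    · exact hsP
  -- pairwise distances at least r
  have key : ∀ i j : Fin (k + 1), (i : ℕ) < (j : ℕ) → r ≤ dist (pts i) (pts j) := by
    intro i j hij
    by_cases hjk : (j : ℕ) < k
    · have hik : (i : ℕ) < k := lt_trans hij hjk
      set i' : Fin k := ⟨i, hik⟩
      set j' : Fin k := ⟨j, hjk⟩
      have hpi : pts i = c i' := by simp [hpts, hik, i']
      have hpj : pts j = c j' := by simp [hpts, hjk, j']
      have hprefne : (c '' {t | t < j'}).Nonempty :=
        ⟨c ⟨0, by omega⟩, Set.mem_image_of_mem _ (by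
          simp only [Set.mem_setOf_eq, Fin.lt_def, Fin.val_mk, j']; omega)⟩
      have h1 : r ≤ setDist s (c '' {t | t < j'}) := by
        calc r = setDist s (↑C : Set X) := hs.symm
          _ ≤ setDist s (c '' {t | t < j'}) := by
              apply setDist_anti _ hprefne
              rw [hCr]
              rintro x ⟨t, _, rfl⟩
              exact Set.mem_range_self t
      have h2 : setDist s (c '' {t | t < j'}) ≤ setDist (c j') (c '' {t | t < j'}) :=
        hmax j' (by simp only [j']; omega) s hsP
      have h3 : setDist (c j') (c '' {t | t < j'}) ≤ dist (c j') (c i') :=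
        setDist_le (Set.mem_image_of_mem _ (by
          simp only [Set.mem_setOf_eq, Fin.lt_def, i', j']; omega))
      rw [hpi, hpj, dist_comm]
      linarith
    · have hjk' : (j : ℕ) = k := by omega
      have hik : (i : ℕ) < k := by omega
      have hpi : pts i = c ⟨i, hik⟩ := by simp [hpts, hik]
      have hpj : pts j = s := by simp [hpts, hjk']
      rw [hpi, hpj, dist_comm, ← hs]
      apply setDist_le
      rw [hCr]
      exact Set.mem_range_self _
  have key2 : ∀ i j : Fin (k + 1), i ≠ j → r ≤ dist (pts i) (pts j) := by
    intro i j hne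
    rcases lt_or_gt_of_ne (Fin.val_ne_of_ne hne) with h | h
    · exact key i j h
    · rw [dist_comm]; exact key j i h
  have hchoice : ∀ i : Fin (k + 1), ∃ o ∈ (↑C' : Set X),
      dist (pts i) o = setDist (pts i) (↑C' : Set X) :=
    fun i => exists_setDist_eq C'.finite_toSet hC'ne
  choose g hg hgd using hchoice
  have hgle : ∀ i, dist (pts i) (g i) ≤ kOPT P k := by
    intro i
    rw [hgd, ← hC'cost]
    exact le_cost P.finite_toSet (by exact_mod_cast hptsP i)
  obtain ⟨i, -, j, -, hij, hgij⟩ :=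
    Finset.exists_ne_map_eq_of_card_lt_of_maps_to
      (s := (Finset.univ : Finset (Fin (k + 1)))) (t := C')
      (by simp [hC'card]) (fun i _ => by exact_mod_cast hg i)
  calc r ≤ dist (pts i) (pts j) := key2 i j hij
    _ ≤ dist (pts i) (g i) + dist (g j) (pts j) := by
        rw [hgij]; exact dist_triangle _ _ _
    _ ≤ kOPT P k + kOPT P k := add_le_add (hgle i) (by rw [dist_comm]; exact hgle j)
    _ = 2 * kOPT P k := by ring
end

section
/- Let (X,d) be a metric space, let S ⊆ X be a nonempty finite set, let k ≥ 1 with k ≤ |S|, and let C be a valid farthest-first output on S with k centers. Set r := cost(C,S) and let x ∈ S be a point with d(x,C) = r. Then any two distinct points u, v of the set C ∪ {x} satisfy d(u,v) ≥ r. -/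
lemma setDist_le_dist {X : Type*} [MetricSpace X] (s : X) {A : Set X} (hA : A.Finite)
    {a : X} (ha : a ∈ A) : setDist s A ≤ dist s a :=
  csInf_le (hA.image _).bddBelow ⟨a, ha, rfl⟩

lemma setDist_anti_s1 {X : Type*} [MetricSpace X] (s : X) {A B : Set X} (hB : B.Finite)
    (hAB : A ⊆ B) (hA : A.Nonempty) : setDist s B ≤ setDist s A :=
  csInf_le_csInf (hB.image _).bddBelow (hA.image _) (Set.image_mono hAB)

lemma cost_le {X : Type*} [MetricSpace X] {C S : Set X} (hS : S.Nonempty) {M : ℝ}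
    (h : ∀ s ∈ S, setDist s C ≤ M) : cost C S ≤ M := by
  apply csSup_le (hS.image _)
  rintro _ ⟨s, hs, rfl⟩
  exact h s hs

/-- If `C` is a valid farthest-first output on `S` with `k` centers, `r := cost(C,S)`,
and `x ∈ S` satisfies `d(x,C) = r`, then any two distinct points of `C ∪ {x}` are at
distance at least `r` from each other. -/
theorem stmt_1 {X : Type*} [MetricSpace X] (S : Finset X) (hS : S.Nonempty)
    (k : ℕ) (hk : 1 ≤ k) (hkS : k ≤ S.card)
    (C : Finset X) (hC : IsFF S k C)
    (r : ℝ) (hr : r = cost (C : Set X) (S : Set X))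
    (x : X) (hx : x ∈ S) (hxr : setDist x (C : Set X) = r) :
    ∀ u ∈ (C : Set X) ∪ {x}, ∀ v ∈ (C : Set X) ∪ {x}, u ≠ v → r ≤ dist u v := by
  obtain ⟨c, hinj, hmem, hrange, hff⟩ := hC
  have hCfin : (C : Set X).Finite := C.finite_toSet
  -- distance from x to any center is ≥ r
  have hxC : ∀ u ∈ (C : Set X), r ≤ dist x u := fun u hu =>
    hxr ▸ setDist_le_dist x hCfin hu
  -- distance between two centers with j < i is ≥ r
  have hcc : ∀ i j : Fin k, j < i → r ≤ dist (c i) (c j) := by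
    intro i j hji
    have hpos : 0 < (i : ℕ) := lt_of_le_of_lt (Nat.zero_le _) hji
    have hpre_sub : c '' {j' | j' < i} ⊆ (C : Set X) := by
      rintro _ ⟨j', _, rfl⟩; rw [hrange]; exact ⟨j', rfl⟩
    have hpre_ne : (c '' {j' | j' < i}).Nonempty := ⟨c j, j, hji, rfl⟩
    have hr_le : r ≤ setDist (c i) (c '' {j' | j' < i}) := by
      rw [hr]
      apply cost_le (by exact_mod_cast hS)
      intro s hs
      exact le_trans (setDist_anti_s1 s hCfin hpre_sub hpre_ne)
        (hff i hpos s (by exact_mod_cast hs))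
    exact le_trans hr_le (setDist_le_dist _ (hCfin.subset hpre_sub) ⟨j, hji, rfl⟩)
  intro u hu v hv huv
  rcases hu with hu | hu <;> rcases hv with hv | hv
  · rw [hrange] at hu hv
    obtain ⟨i, rfl⟩ := hu
    obtain ⟨j, rfl⟩ := hv
    rcases lt_trichotomy j i with h | h | h
    · exact hcc i j h
    · exact absurd (congrArg c h.symm) huv
    · rw [dist_comm]; exact hcc j i h
  · rw [Set.mem_singleton_iff] at hv; subst hv
    rw [dist_comm]; exact hxC u hu
  · rw [Set.mem_singleton_iff] at hu; subst hu
    exact hxC v hv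
  · exact absurd (hu.trans hv.symm) huv
end

section
/- (Lifting Lemma) Let (X,d) be a metric space, let P ⊆ X be a nonempty finite set, let δ > 0, and let Q ⊆ P be a δ-cover of P. Then for every nonempty subset C ⊆ Q, cost(C,P) ≤ cost(C,Q) + δ. -/
/-- Lifting Lemma: if `Q ⊆ P` is a `δ`-cover of the nonempty finite set `P`,
then for every nonempty `C ⊆ Q`, `cost(C,P) ≤ cost(C,Q) + δ`. -/
theorem stmt_8 {X : Type*} [MetricSpace X] (P Q : Finset X) (hP : P.Nonempty)
    (δ : ℝ) (hδ : 0 < δ) (hQP : Q ⊆ P)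
    (hcover : ∀ p ∈ P, ∃ q ∈ Q, dist p q ≤ δ)
    (C : Finset X) (hC : C.Nonempty) (hCQ : C ⊆ Q) :
    cost (C : Set X) (P : Set X) ≤ cost (C : Set X) (Q : Set X) + δ := by
  have hCfin : ((fun c => dist · c) '' (C : Set X)).Finite := by
    exact Set.Finite.image _ C.finite_toSet
  -- setDist q C ≤ cost C Q for q ∈ Q
  have hQne : Q.Nonempty := hC.mono hCQ
  have hQfin : ((fun s => setDist s (C : Set X)) '' (Q : Set X)).Finite :=
    Set.Finite.image _ Q.finite_toSet
  have hbdd : BddAbove ((fun s => setDist s (C : Set X)) '' (Q : Set X)) :=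
    hQfin.bddAbove
  apply Real.sSup_le
  · rintro x ⟨p, hp, rfl⟩
    have hp' : p ∈ P := hp
    obtain ⟨q, hq, hpq⟩ := hcover p hp'
    -- setDist q C attained
    have hfin : ((fun c => dist q c) '' (C : Set X)).Finite :=
      Set.Finite.image _ C.finite_toSet
    have hne : ((fun c => dist q c) '' (C : Set X)).Nonempty :=
      (Set.image_nonempty).2 (by exact_mod_cast hC)
    obtain ⟨y, hy, hymin⟩ := hfin.exists_minimalFor id _ hne
    obtain ⟨c₀, hc₀, rfl⟩ := hy
    have hinf : setDist q (C : Set X) = dist q c₀ := by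
      apply le_antisymm
      · exact csInf_le hfin.bddBelow ⟨c₀, hc₀, rfl⟩
      · apply le_csInf hne
        rintro b ⟨c, hc, rfl⟩
        by_contra h
        push_neg at h
        exact absurd (hymin ⟨c, hc, rfl⟩ h.le) (not_le.mpr h)
    have h1 : setDist p (C : Set X) ≤ dist p c₀ :=
      csInf_le ((Set.Finite.image _ C.finite_toSet).bddBelow) ⟨c₀, hc₀, rfl⟩
    have h2 : dist p c₀ ≤ dist p q + dist q c₀ := dist_triangle _ _ _
    have h3 : setDist q (C : Set X) ≤ cost (C : Set X) (Q : Set X) :=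
      le_csSup hbdd ⟨q, hq, rfl⟩
    calc setDist p (C : Set X) ≤ dist p q + dist q c₀ := h1.trans h2
      _ ≤ δ + setDist q (C : Set X) := by rw [hinf]; linarith
      _ ≤ cost (C : Set X) (Q : Set X) + δ := by linarith
  · -- cost C Q ≥ 0, plus δ > 0
    obtain ⟨q, hq⟩ := hQne
    have h3 : setDist q (C : Set X) ≤ cost (C : Set X) (Q : Set X) :=
      le_csSup hbdd ⟨q, hq, rfl⟩
    have h0 : 0 ≤ setDist q (C : Set X) := by
      apply Real.sInf_nonneg
      rintro b ⟨c, hc, rfl⟩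
      exact dist_nonneg
    linarith
end
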